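/- Let γ : [0,1] → ℂ be continuous. If the standard annuli A_{r_n,1} = {r_n < |z| < 1} and A_{s_n,1} are biholomorphic then r_n = s_n; that is, two standard annuli A_{r,1} and A_{s,1} with 0 < r, s < 1 are biholomorphic if and only if r = s. -/

import Mathlib

open Set Complex

/-- An open "ring" `{a < |z| < b}` with `0 ≤ a` is preconnected. -/
lemma ring_preconnected {a b : ℝ} (ha : 0 ≤ a) :
    IsPreconnected {z : ℂ | a < ‖z‖ ∧ ‖z‖ < b} := by
  have h : {z : ℂ | a < ‖z‖ ∧ ‖z‖ < b} =
      (fun p : ℝ × ℝ => (p.1 : ℂ) * Complex.exp (p.2 * Complex.I)) '' (Ioo a b ×ˢ univ) := by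
    ext z
    constructor
    · rintro ⟨h1, h2⟩
      exact ⟨⟨‖z‖, Complex.arg z⟩, ⟨⟨h1, h2⟩, trivial⟩,
        Complex.norm_mul_exp_arg_mul_I z⟩
    · rintro ⟨⟨ρ, θ⟩, ⟨⟨h1, h2⟩, -⟩, rfl⟩
      have hρ : 0 ≤ ρ := le_trans ha h1.le
      simp only [mem_setOf_eq, norm_mul, Complex.norm_exp_ofReal_mul_I, mul_one,
        Complex.norm_real, Real.norm_eq_abs, _root_.abs_of_nonneg hρ]
      exact ⟨h1, h2⟩
  rw [h]
  exact (isPreconnected_Ioo.prod isPreconnected_univ).image _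
    (Continuous.continuousOn (by continuity))

/-- Maximum modulus principle on a closed subannulus. -/
lemma circle_bound {r : ℝ} {G : ℂ → ℂ}
    (hG : DifferentiableOn ℂ G {z : ℂ | r < ‖z‖ ∧ ‖z‖ < 1})
    {ρ₁ ρ₂ C : ℝ} (h1 : r < ρ₁) (h2 : ρ₂ < 1)
    (hb : ∀ z : ℂ, ‖z‖ = ρ₁ ∨ ‖z‖ = ρ₂ → ‖G z‖ ≤ C)
    {z₀ : ℂ} (hz1 : ρ₁ < ‖z₀‖) (hz2 : ‖z₀‖ < ρ₂) : ‖G z₀‖ ≤ C := by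
  set U : Set ℂ := {z : ℂ | ρ₁ < ‖z‖ ∧ ‖z‖ < ρ₂} with hU
  have hUb : Bornology.IsBounded U := by
    refine (Metric.isBounded_ball (x := (0:ℂ)) (r := ρ₂)).subset ?_
    intro z hz
    simpa [Metric.mem_ball, Complex.dist_eq] using hz.2
  have hclosed : IsClosed {z : ℂ | ρ₁ ≤ ‖z‖ ∧ ‖z‖ ≤ ρ₂} := by
    have : {z : ℂ | ρ₁ ≤ ‖z‖ ∧ ‖z‖ ≤ ρ₂} =
        (fun z : ℂ => ‖z‖) ⁻¹' (Icc ρ₁ ρ₂) := rfl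
    rw [this]
    exact isClosed_Icc.preimage continuous_norm
  have hclU : closure U ⊆ {z : ℂ | ρ₁ ≤ ‖z‖ ∧ ‖z‖ ≤ ρ₂} :=
    closure_minimal (fun z hz => ⟨hz.1.le, hz.2.le⟩) hclosed
  have hclA : closure U ⊆ {z : ℂ | r < ‖z‖ ∧ ‖z‖ < 1} := fun z hz =>
    ⟨lt_of_lt_of_le h1 (hclU hz).1, lt_of_le_of_lt (hclU hz).2 h2⟩
  have hUopen : IsOpen U := by
    have : U = (fun z : ℂ => ‖z‖) ⁻¹' (Ioo ρ₁ ρ₂) := rfl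
    rw [this]
    exact isOpen_Ioo.preimage continuous_norm
  have hd : DiffContOnCl ℂ G U := (hG.mono hclA).diffContOnCl
  have hfr : ∀ z ∈ frontier U, ‖G z‖ ≤ C := by
    intro z hz
    have h1' := hclU (frontier_subset_closure hz)
    rw [hUopen.frontier_eq] at hz
    have : ‖z‖ = ρ₁ ∨ ‖z‖ = ρ₂ := by
      rcases lt_or_ge ρ₁ (‖z‖) with h | h
      · rcases lt_or_ge (‖z‖) ρ₂ with h' | h'
        · exact absurd ⟨h, h'⟩ hz.2
        · exact Or.inr (le_antisymm h1'.2 h')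
      · exact Or.inl (le_antisymm h h1'.1)
    exact hb z this
  exact Complex.norm_le_of_forall_mem_frontier_norm_le hUb hd hfr
    (subset_closure (⟨hz1, hz2⟩ : z₀ ∈ U))

lemma upper_bound {r s : ℝ} (hr0 : 0 < r) (hs0 : 0 < s) {f : ℂ → ℂ}
    (hf : DifferentiableOn ℂ f {z : ℂ | r < ‖z‖ ∧ ‖z‖ < 1})
    (hmf : MapsTo f {z : ℂ | r < ‖z‖ ∧ ‖z‖ < 1}
      {z : ℂ | s < ‖z‖ ∧ ‖z‖ < 1})
    (hb' : ∀ ε > 0, ∃ δ > 0, ∀ z : ℂ, r < ‖z‖ → ‖z‖ < r + δ →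
      ‖f z‖ < s + ε)
    {p q : ℕ} (hp : 0 < p) (hq : s ^ p ≤ r ^ q) {z₀ : ℂ}
    (hz : z₀ ∈ {z : ℂ | r < ‖z‖ ∧ ‖z‖ < 1}) :
    (‖f z₀‖) ^ p ≤ (‖z₀‖) ^ q := by
  have hz₀pos : 0 < ‖z₀‖ := lt_trans hr0 hz.1
  have hYpos : 0 < (‖z₀‖) ^ q := pow_pos hz₀pos q
  suffices h : ∀ L : ℝ, 1 < L → (‖f z₀‖) ^ p ≤ L * (‖z₀‖) ^ q by
    by_contra hcon
    push_neg at hcon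
    have := h ((‖z₀‖ ^ q + ‖f z₀‖ ^ p) / (2 * ‖z₀‖ ^ q))
      (by rw [lt_div_iff₀ (by positivity)]; linarith)
    have heq : (‖z₀‖ ^ q + ‖f z₀‖ ^ p) / (2 * ‖z₀‖ ^ q) *
        ‖z₀‖ ^ q = (‖z₀‖ ^ q + ‖f z₀‖ ^ p) / 2 := by
      field_simp
    rw [heq] at this
    linarith
  intro L hL
  have hrq : (0:ℝ) < r ^ q := pow_pos hr0 q
  -- choose ε
  have hsp : s ^ p < L * r ^ q := lt_of_le_of_lt hq (by nlinarith)
  have htε : Filter.Tendsto (fun ε : ℝ => (s + ε) ^ p) (nhdsWithin 0 (Ioi 0)) (nhds (s ^ p)) := by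
    have : ContinuousAt (fun ε : ℝ => (s + ε) ^ p) 0 := by fun_prop
    simpa using this.tendsto.mono_left nhdsWithin_le_nhds
  obtain ⟨ε, hεb, hε0⟩ :=
    ((htε.eventually (eventually_lt_nhds hsp)).and self_mem_nhdsWithin).exists
  obtain ⟨δ, hδ0, hδ⟩ := hb' ε hε0
  -- choose ρ₁
  set ρ₁ : ℝ := (r + min (r + δ) (‖z₀‖)) / 2 with hρ₁def
  have hρ₁r : r < ρ₁ := by
    have : r < min (r + δ) (‖z₀‖) := lt_min (by linarith) hz.1
    rw [hρ₁def]; linarith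
  have hρ₁δ : ρ₁ < r + δ := by
    have : min (r + δ) (‖z₀‖) ≤ r + δ := min_le_left _ _
    rw [hρ₁def]; linarith
  have hρ₁z : ρ₁ < ‖z₀‖ := by
    have : min (r + δ) (‖z₀‖) ≤ ‖z₀‖ := min_le_right _ _
    rw [hρ₁def]; linarith
  -- choose ρ₂
  have htρ : Filter.Tendsto (fun ρ : ℝ => L * ρ ^ q) (nhdsWithin 1 (Iio 1)) (nhds (L * 1 ^ q)) := by
    have : ContinuousAt (fun ρ : ℝ => L * ρ ^ q) 1 := by fun_prop
    exact this.tendsto.mono_left nhdsWithin_le_nhds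
  have hL1 : (1:ℝ) < L * 1 ^ q := by simpa using hL
  obtain ⟨ρ₂, hρ₂b, hρ₂m⟩ := ((htρ.eventually (eventually_gt_nhds hL1)).and
    (Ioo_mem_nhdsLT_of_mem (⟨hz.2, le_refl 1⟩ : (1:ℝ) ∈ Ioc (‖z₀‖) 1))).exists
  obtain ⟨hρ₂z, hρ₂1⟩ := hρ₂m
  -- apply circle_bound to G = f^p / z^q
  have hne : ∀ z : ℂ, z ∈ {z : ℂ | r < ‖z‖ ∧ ‖z‖ < 1} → z ≠ 0 := by
    intro z hz h
    rw [h] at hz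
    simp only [mem_setOf_eq, norm_zero] at hz
    linarith [hz.1]
  have hGd : DifferentiableOn ℂ (fun z => f z ^ p / z ^ q)
      {z : ℂ | r < ‖z‖ ∧ ‖z‖ < 1} :=
    (hf.pow p).div (differentiableOn_id.pow q) (fun z hz => pow_ne_zero q (hne z hz))
  have hkey := circle_bound (C := L) hGd hρ₁r hρ₂1 ?_ hρ₁z hρ₂z
  · have hnorm : ‖f z₀ ^ p / z₀ ^ q‖ = ‖f z₀‖ ^ p / ‖z₀‖ ^ q := by
      simp [norm_div, norm_pow]
    rw [hnorm, div_le_iff₀ hYpos] at hkey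
    exact hkey
  · intro z hzc
    have hzA : z ∈ {z : ℂ | r < ‖z‖ ∧ ‖z‖ < 1} := by
      rcases hzc with h | h
      · exact ⟨h ▸ hρ₁r, h ▸ lt_trans (lt_trans hρ₁z hρ₂z) hρ₂1⟩
      · exact ⟨h ▸ lt_trans hρ₁r (lt_trans hρ₁z hρ₂z), h ▸ hρ₂1⟩
    have hnorm : ‖f z ^ p / z ^ q‖ = ‖f z‖ ^ p / ‖z‖ ^ q := by
      simp [norm_div, norm_pow]
    rw [hnorm]
    rcases hzc with h | h
    · -- inner circle
      have hfz : ‖f z‖ < s + ε := hδ z hzA.1 (by rw [h]; exact hρ₁δ)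
      have h1 : ‖f z‖ ^ p ≤ (s + ε) ^ p := by
        apply pow_le_pow_left₀ (norm_nonneg _) hfz.le
      have h2 : r ^ q ≤ ‖z‖ ^ q := by
        apply pow_le_pow_left₀ hr0.le (by rw [h]; exact hρ₁r.le)
      calc ‖f z‖ ^ p / ‖z‖ ^ q ≤ (s + ε) ^ p / r ^ q := by
            apply div_le_div₀ (by positivity) h1 hrq h2
        _ ≤ L := by rw [div_le_iff₀ hrq]; nlinarith [hεb]
    · -- outer circle
      have hfz : ‖f z‖ < 1 := (hmf hzA).2
      have h1 : ‖f z‖ ^ p ≤ 1 := pow_le_one₀ (norm_nonneg _) hfz.le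
      have h2 : 0 < ‖z‖ ^ q := pow_pos (lt_trans hr0 hzA.1) q
      rw [div_le_iff₀ h2, h]
      nlinarith [hρ₂b]

lemma lower_bound {r s : ℝ} (hr0 : 0 < r) (hs0 : 0 < s) {f : ℂ → ℂ}
    (hf : DifferentiableOn ℂ f {z : ℂ | r < ‖z‖ ∧ ‖z‖ < 1})
    (hmf : MapsTo f {z : ℂ | r < ‖z‖ ∧ ‖z‖ < 1}
      {z : ℂ | s < ‖z‖ ∧ ‖z‖ < 1})
    (hb : ∀ ε > 0, ∃ δ > 0, ∀ z : ℂ, 1 - δ < ‖z‖ → ‖z‖ < 1 →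
      1 - ε < ‖f z‖)
    {p q : ℕ} (hp : 0 < p) (hq : r ^ q ≤ s ^ p) {z₀ : ℂ}
    (hz : z₀ ∈ {z : ℂ | r < ‖z‖ ∧ ‖z‖ < 1}) :
    (‖z₀‖) ^ q ≤ (‖f z₀‖) ^ p := by
  have hz₀pos : 0 < ‖z₀‖ := lt_trans hr0 hz.1
  have hfz₀pos : 0 < ‖f z₀‖ := lt_trans hs0 (hmf hz).1
  have hYpos : 0 < (‖f z₀‖) ^ p := pow_pos hfz₀pos p
  suffices h : ∀ L : ℝ, 1 < L → (‖z₀‖) ^ q ≤ L * (‖f z₀‖) ^ p by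
    by_contra hcon
    push_neg at hcon
    have := h ((‖f z₀‖ ^ p + ‖z₀‖ ^ q) / (2 * ‖f z₀‖ ^ p))
      (by rw [lt_div_iff₀ (by positivity)]; linarith)
    have heq : (‖f z₀‖ ^ p + ‖z₀‖ ^ q) / (2 * ‖f z₀‖ ^ p) *
        ‖f z₀‖ ^ p = (‖f z₀‖ ^ p + ‖z₀‖ ^ q) / 2 := by
      field_simp
    rw [heq] at this
    linarith
  intro L hL
  have hsp : (0:ℝ) < s ^ p := pow_pos hs0 p
  -- choose ε with 1 < L * (1-ε)^p and ε < 1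
  have htε : Filter.Tendsto (fun ε : ℝ => L * (1 - ε) ^ p) (nhdsWithin 0 (Ioi 0))
      (nhds (L * (1 - 0) ^ p)) := by
    have : ContinuousAt (fun ε : ℝ => L * (1 - ε) ^ p) 0 := by fun_prop
    exact this.tendsto.mono_left nhdsWithin_le_nhds
  have hL1 : (1:ℝ) < L * (1 - 0) ^ p := by simpa using hL
  obtain ⟨ε, hεb, hε0'⟩ := ((htε.eventually (eventually_gt_nhds hL1)).and
    (Ioo_mem_nhdsGT_of_mem (⟨le_refl 0, zero_lt_one⟩ : (0:ℝ) ∈ Ico 0 1))).exists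
  obtain ⟨hε0, hε1⟩ := hε0'
  obtain ⟨δ, hδ0, hδ⟩ := hb ε hε0
  -- choose ρ₂ with max (1-δ) (abs z₀) < ρ₂ < 1
  obtain ⟨ρ₂, hρ₂m⟩ := exists_between
    (max_lt (show (1:ℝ) - δ < 1 by linarith) hz.2 : max (1 - δ) (‖z₀‖) < 1)
  have hρ₂δ : 1 - δ < ρ₂ := lt_of_le_of_lt (le_max_left _ _) hρ₂m.1
  have hρ₂z : ‖z₀‖ < ρ₂ := lt_of_le_of_lt (le_max_right _ _) hρ₂m.1
  have hρ₂1 : ρ₂ < 1 := hρ₂m.2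
  -- choose ρ₁ near r with ρ₁^q < L * s^p and r < ρ₁ < abs z₀
  have hrq : r ^ q < L * s ^ p := lt_of_le_of_lt hq (by nlinarith)
  have htρ : Filter.Tendsto (fun ρ : ℝ => ρ ^ q) (nhdsWithin r (Ioi r)) (nhds (r ^ q)) := by
    have : ContinuousAt (fun ρ : ℝ => ρ ^ q) r := by fun_prop
    exact this.tendsto.mono_left nhdsWithin_le_nhds
  obtain ⟨ρ₁, hρ₁b, hρ₁m⟩ := ((htρ.eventually (eventually_lt_nhds hrq)).and
    (Ioo_mem_nhdsGT_of_mem (⟨le_refl r, hz.1⟩ : r ∈ Ico r (‖z₀‖)))).exists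
  obtain ⟨hρ₁r, hρ₁z⟩ := hρ₁m
  -- G = z^q / f^p
  have hfne : ∀ z : ℂ, z ∈ {z : ℂ | r < ‖z‖ ∧ ‖z‖ < 1} → f z ≠ 0 := by
    intro z hz h
    have := (hmf hz).1
    rw [h] at this
    simp only [norm_zero] at this
    linarith
  have hGd : DifferentiableOn ℂ (fun z => z ^ q / f z ^ p)
      {z : ℂ | r < ‖z‖ ∧ ‖z‖ < 1} :=
    (differentiableOn_id.pow q).div (hf.pow p) (fun z hz => pow_ne_zero p (hfne z hz))
  have hkey := circle_bound (C := L) hGd hρ₁r hρ₂1 ?_ hρ₁z hρ₂z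
  · have hnorm : ‖z₀ ^ q / f z₀ ^ p‖ = ‖z₀‖ ^ q / ‖f z₀‖ ^ p := by
      simp [norm_div, norm_pow]
    rw [hnorm, div_le_iff₀ hYpos] at hkey
    exact hkey
  · intro z hzc
    have hzA : z ∈ {z : ℂ | r < ‖z‖ ∧ ‖z‖ < 1} := by
      rcases hzc with h | h
      · exact ⟨h ▸ hρ₁r, h ▸ lt_trans (lt_trans hρ₁z hρ₂z) hρ₂1⟩
      · exact ⟨h ▸ lt_trans hρ₁r (lt_trans hρ₁z hρ₂z), h ▸ hρ₂1⟩
    have hnorm : ‖z ^ q / f z ^ p‖ = ‖z‖ ^ q / ‖f z‖ ^ p := by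
      simp [norm_div, norm_pow]
    rw [hnorm]
    have hfzpos : 0 < ‖f z‖ := lt_trans hs0 (hmf hzA).1
    rcases hzc with h | h
    · -- inner circle : |z|^q = ρ₁^q < L s^p ≤ L |f z|^p
      have h2 : s ^ p ≤ ‖f z‖ ^ p :=
        pow_le_pow_left₀ hs0.le (hmf hzA).1.le p
      rw [div_le_iff₀ (by positivity), h]
      nlinarith
    · -- outer circle : |z|^q ≤ 1, |f z|^p ≥ (1-ε)^p, 1 ≤ L (1-ε)^p
      have hfz : 1 - ε < ‖f z‖ := hδ z (by rw [h]; exact hρ₂δ) hzA.2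
      have h1 : ‖z‖ ^ q ≤ 1 := by
        rw [h]; exact pow_le_one₀ (by linarith [lt_trans hρ₁r hρ₁z] : (0:ℝ) ≤ ρ₂) hρ₂1.le
      have h2 : (1 - ε) ^ p ≤ ‖f z‖ ^ p :=
        pow_le_pow_left₀ (by linarith) hfz.le p
      rw [div_le_iff₀ (by positivity)]
      nlinarith

lemma log_abs_eq {r s : ℝ} (hr0 : 0 < r) (hr1 : r < 1) (hs0 : 0 < s) (hs1 : s < 1) {f : ℂ → ℂ}
    (hf : DifferentiableOn ℂ f {z : ℂ | r < ‖z‖ ∧ ‖z‖ < 1})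
    (hmf : MapsTo f {z : ℂ | r < ‖z‖ ∧ ‖z‖ < 1}
      {z : ℂ | s < ‖z‖ ∧ ‖z‖ < 1})
    (hb : ∀ ε > 0, ∃ δ > 0, ∀ z : ℂ, 1 - δ < ‖z‖ → ‖z‖ < 1 →
      1 - ε < ‖f z‖)
    (hb' : ∀ ε > 0, ∃ δ > 0, ∀ z : ℂ, r < ‖z‖ → ‖z‖ < r + δ →
      ‖f z‖ < s + ε)
    {z₀ : ℂ} (hz : z₀ ∈ {z : ℂ | r < ‖z‖ ∧ ‖z‖ < 1}) :
    Real.log (‖f z₀‖) =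
      (Real.log s / Real.log r) * Real.log (‖z₀‖) := by
  have hlr : Real.log r < 0 := Real.log_neg hr0 hr1
  have hls : Real.log s < 0 := Real.log_neg hs0 hs1
  set lr := Real.log r
  set ls := Real.log s
  set α := ls / lr with hαdef
  have hα : 0 < α := div_pos_of_neg_of_neg hls hlr
  have hz₀pos : 0 < ‖z₀‖ := lt_trans hr0 hz.1
  have hfz₀pos : 0 < ‖f z₀‖ := lt_trans hs0 (hmf hz).1
  set a := Real.log (‖z₀‖) with hadef
  set b := Real.log (‖f z₀‖) with hbdef
  have ha0 : a < 0 := Real.log_neg hz₀pos hz.2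
  -- upper family
  have hup : ∀ t : ℚ, 0 ≤ (t : ℝ) → (t : ℝ) ≤ α → b ≤ t * a := by
    intro t ht0 htα
    set p : ℕ := t.den with hpdef
    set q : ℕ := t.num.toNat with hqdef
    have hp : 0 < p := t.pos
    have hnum : (0:ℤ) ≤ t.num := Rat.num_nonneg.mpr (by exact_mod_cast ht0)
    have hcast : (t : ℝ) = (q : ℝ) / (p : ℝ) := by
      rw [Rat.cast_def, hqdef, hpdef]
      congr 1
      exact_mod_cast (Int.toNat_of_nonneg hnum).symm
    have hppos : (0:ℝ) < (p : ℝ) := by exact_mod_cast hp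
    -- s^p ≤ r^q
    have hcond : s ^ p ≤ r ^ q := by
      rw [← Real.log_le_log_iff (pow_pos hs0 p) (pow_pos hr0 q), Real.log_pow, Real.log_pow]
      have h1 : (t : ℝ) * lr ≥ α * lr := by
        apply mul_le_mul_of_nonpos_right htα hlr.le
      rw [hαdef, div_mul_cancel₀ _ (ne_of_lt hlr)] at h1
      rw [hcast] at h1
      have := mul_le_mul_of_nonneg_left h1 hppos.le
      calc (p : ℝ) * ls ≤ (p:ℝ) * ((q:ℝ)/(p:ℝ) * lr) := this
        _ = (q : ℝ) * lr := by field_simp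
    have hpow := upper_bound hr0 hs0 hf hmf hb' hp hcond hz
    have hlog : (p : ℝ) * b ≤ (q : ℝ) * a := by
      rw [hbdef, hadef, ← Real.log_pow, ← Real.log_pow]
      exact Real.log_le_log (pow_pos hfz₀pos p) hpow
    rw [hcast, div_mul_eq_mul_div, le_div_iff₀ hppos]
    nlinarith [hlog]
  -- lower family
  have hlo : ∀ t : ℚ, α ≤ (t : ℝ) → t * a ≤ b := by
    intro t htα
    have ht0 : 0 ≤ (t : ℝ) := le_trans hα.le htα
    set p : ℕ := t.den with hpdef
    set q : ℕ := t.num.toNat with hqdef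
    have hp : 0 < p := t.pos
    have hnum : (0:ℤ) ≤ t.num := Rat.num_nonneg.mpr (by exact_mod_cast ht0)
    have hcast : (t : ℝ) = (q : ℝ) / (p : ℝ) := by
      rw [Rat.cast_def, hqdef, hpdef]
      congr 1
      exact_mod_cast (Int.toNat_of_nonneg hnum).symm
    have hppos : (0:ℝ) < (p : ℝ) := by exact_mod_cast hp
    have hcond : r ^ q ≤ s ^ p := by
      rw [← Real.log_le_log_iff (pow_pos hr0 q) (pow_pos hs0 p), Real.log_pow, Real.log_pow]
      have h1 : (t : ℝ) * lr ≤ α * lr := by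
        apply mul_le_mul_of_nonpos_right htα hlr.le
      rw [hαdef, div_mul_cancel₀ _ (ne_of_lt hlr)] at h1
      rw [hcast] at h1
      have := mul_le_mul_of_nonneg_left h1 hppos.le
      calc (q : ℝ) * lr = (p:ℝ) * ((q:ℝ)/(p:ℝ) * lr) := by field_simp
        _ ≤ (p : ℝ) * ls := this
    have hpow := lower_bound hr0 hs0 hf hmf hb hp hcond hz
    have hlog : (q : ℝ) * a ≤ (p : ℝ) * b := by
      rw [hbdef, hadef, ← Real.log_pow, ← Real.log_pow]
      exact Real.log_le_log (pow_pos hz₀pos q) hpow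
    rw [hcast, div_mul_eq_mul_div, div_le_iff₀ hppos]
    nlinarith [hlog]
  -- combine
  have hub : b ≤ α * a := by
    apply le_of_forall_gt_imp_ge_of_dense
    intro c hc
    have hca : c / a < α := by
      rw [div_lt_iff_of_neg (by exact ha0)]
      linarith [hc]
    obtain ⟨t, ht1, ht2⟩ := exists_rat_btwn (max_lt hca hα : max (c / a) 0 < α)
    have ht0 : (0:ℝ) ≤ (t:ℝ) := le_of_lt (lt_of_le_of_lt (le_max_right _ _) ht1)
    have := hup t ht0 ht2.le
    have hta : (t : ℝ) * a < c := by
      have h1 : c / a < (t : ℝ) := lt_of_le_of_lt (le_max_left _ _) ht1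
      calc (t:ℝ) * a < (c / a) * a := by
            apply mul_lt_mul_of_neg_right h1 ha0
        _ = c := div_mul_cancel₀ c (ne_of_lt ha0)
    linarith
  have hlb : α * a ≤ b := by
    apply le_of_forall_lt_imp_le_of_dense
    intro c hc
    have hca : α < c / a := by
      rw [lt_div_iff_of_neg (by exact ha0)]
      linarith [hc]
    obtain ⟨t, ht1, ht2⟩ := exists_rat_btwn hca
    have := hlo t ht1.le
    have hta : c < (t : ℝ) * a := by
      calc c = (c / a) * a := (div_mul_cancel₀ c (ne_of_lt ha0)).symm
        _ < (t:ℝ) * a := by apply mul_lt_mul_of_neg_right ht2 ha0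
    linarith
  linarith

lemma key {r s : ℝ} (hr0 : 0 < r) (hr1 : r < 1) (hs0 : 0 < s) (hs1 : s < 1) {f g : ℂ → ℂ}
    (hf : DifferentiableOn ℂ f {z : ℂ | r < ‖z‖ ∧ ‖z‖ < 1})
    (hmf : MapsTo f {z : ℂ | r < ‖z‖ ∧ ‖z‖ < 1}
      {z : ℂ | s < ‖z‖ ∧ ‖z‖ < 1})
    (hgf : ∀ z ∈ {z : ℂ | r < ‖z‖ ∧ ‖z‖ < 1}, g (f z) = z)
    (hb : ∀ ε > 0, ∃ δ > 0, ∀ z : ℂ, 1 - δ < ‖z‖ → ‖z‖ < 1 →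
      1 - ε < ‖f z‖)
    (hb' : ∀ ε > 0, ∃ δ > 0, ∀ z : ℂ, r < ‖z‖ → ‖z‖ < r + δ →
      ‖f z‖ < s + ε) : r = s := by
  have hlr : Real.log r < 0 := Real.log_neg hr0 hr1
  have hls : Real.log s < 0 := Real.log_neg hs0 hs1
  set α : ℝ := Real.log s / Real.log r with hαdef
  have hα : 0 < α := div_pos_of_neg_of_neg hls hlr
  set A : Set ℂ := {z : ℂ | r < ‖z‖ ∧ ‖z‖ < 1} with hAdef
  have habs : ∀ z ∈ A, ‖f z‖ = Real.exp (α * Real.log (‖z‖)) := by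
    intro z hz
    have := log_abs_eq hr0 hr1 hs0 hs1 hf hmf hb hb' hz
    rw [← this, Real.exp_log (lt_trans hs0 (hmf hz).1)]
  -- Step C : local rigidity
  have hlocal : ∀ z₀ ∈ A, ∃ η > 0, ∀ t : ℂ, ‖t‖ < η →
      (z₀ * Complex.exp t ∈ A ∧ f (z₀ * Complex.exp t) = f z₀ * Complex.exp ((α : ℂ) * t)) := by
    intro z₀ hz₀
    have hz₀pos : 0 < ‖z₀‖ := lt_trans hr0 hz₀.1
    have hlog1 : Real.log (‖z₀‖) < 0 := Real.log_neg hz₀pos hz₀.2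
    have hlog2 : Real.log r < Real.log (‖z₀‖) := Real.log_lt_log hr0 hz₀.1
    set η : ℝ := min (-(Real.log (‖z₀‖))) (Real.log (‖z₀‖) - Real.log r)
      with hηdef
    have hη : 0 < η := lt_min (by linarith) (by linarith)
    have hη1 : η ≤ -(Real.log (‖z₀‖)) := min_le_left _ _
    have hη2 : η ≤ Real.log (‖z₀‖) - Real.log r := min_le_right _ _
    have hmem : ∀ t : ℂ, ‖t‖ < η → z₀ * Complex.exp t ∈ A := by
      intro t ht
      have hre : |t.re| < η := lt_of_le_of_lt (Complex.abs_re_le_norm t) ht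
      have h1 : -η < t.re := neg_lt_of_abs_lt hre
      have h2 : t.re < η := lt_of_abs_lt hre
      have habs' : ‖z₀ * Complex.exp t‖ =
          Real.exp (Real.log (‖z₀‖) + t.re) := by
        rw [norm_mul, Complex.norm_exp, Real.exp_add, Real.exp_log hz₀pos]
      refine ⟨?_, ?_⟩
      · rw [habs', ← Real.exp_log hr0, Real.exp_lt_exp]
        linarith
      · rw [habs', show (1:ℝ) = Real.exp 0 from Real.exp_zero.symm, Real.exp_lt_exp]
        linarith
    refine ⟨η, hη, fun t ht => ⟨hmem t ht, ?_⟩⟩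
    set F : ℂ → ℂ := fun u => f (z₀ * Complex.exp u) * Complex.exp (-(α : ℂ) * u) with hFdef
    have hFd : DifferentiableOn ℂ F (Metric.ball (0:ℂ) η) := by
      apply DifferentiableOn.mul
      · apply hf.comp
        · exact ((differentiable_const z₀).mul differentiable_exp).differentiableOn
        · intro u hu
          exact hmem u (by simpa [Metric.mem_ball, dist_eq_norm] using hu)
      · exact (((differentiable_const (-(α:ℂ))).mul differentiable_id).cexp).differentiableOn
    have hFnorm : ∀ u : ℂ, ‖u‖ < η → ‖F u‖ = Real.exp (α * Real.log (‖z₀‖)) := by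
      intro u hu
      have hmem' := hmem u hu
      have habs2 : Real.log (‖z₀ * Complex.exp u‖) =
          Real.log (‖z₀‖) + u.re := by
        rw [norm_mul, Complex.norm_exp, Real.log_mul hz₀pos.ne' (Real.exp_pos _).ne',
          Real.log_exp]
      have hre2 : (-(α:ℂ) * u).re = -(α * u.re) := by
        simp [Complex.mul_re]
      show ‖f (z₀ * Complex.exp u) * Complex.exp (-(α:ℂ) * u)‖ = _
      rw [norm_mul, habs _ hmem', Complex.norm_exp, habs2, hre2, ← Real.exp_add]
      congr 1
      ring
    have hmax := Complex.eqOn_of_isPreconnected_of_isMaxOn_norm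
      (convex_ball (0:ℂ) η).isPreconnected Metric.isOpen_ball hFd
      (Metric.mem_ball_self hη) ?_
    · have h0 : F 0 = f z₀ := by
        simp [hFdef]
      have ht' : t ∈ Metric.ball (0:ℂ) η := by
        simpa [Metric.mem_ball, dist_eq_norm] using ht
      have hconst := hmax ht'
      simp only [Function.const_apply] at hconst
      rw [h0] at hconst
      have this2 : f (z₀ * Complex.exp t) * Complex.exp (-(α:ℂ) * t) = f z₀ := hconst
      have hee : Complex.exp (-(α:ℂ) * t) * Complex.exp ((α:ℂ) * t) = 1 := by
        rw [← Complex.exp_add]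
        simp
      rw [← this2, mul_assoc, hee, mul_one]
    · intro u hu
      have hu' : ‖u‖ < η := by simpa [Metric.mem_ball, dist_eq_norm] using hu
      show ‖F u‖ ≤ ‖F 0‖
      rw [hFnorm u hu', hFnorm 0 (by simpa using hη)]
  -- Step D : the circle function is locally constant
  set ρ : ℝ := (r + 1) / 2 with hρdef
  have hρr : r < ρ := by rw [hρdef]; linarith
  have hρ1 : ρ < 1 := by rw [hρdef]; linarith
  have hρ0 : 0 < ρ := lt_trans hr0 hρr
  have hcircabs : ∀ θ : ℝ, ‖(ρ:ℂ) * Complex.exp (θ * Complex.I)‖ = ρ := by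
    intro θ
    rw [norm_mul, Complex.norm_exp_ofReal_mul_I, mul_one, Complex.norm_real, Real.norm_eq_abs, abs_of_pos hρ0]
  have hcirc : ∀ θ : ℝ, ((ρ:ℂ) * Complex.exp (θ * Complex.I)) ∈ A := by
    intro θ
    refine ⟨?_, ?_⟩ <;> rw [hcircabs θ]
    · exact hρr
    · exact hρ1
  set ψ : ℝ → ℂ := fun θ => f ((ρ:ℂ) * Complex.exp (θ * Complex.I)) *
    Complex.exp (-(α:ℂ) * (θ * Complex.I)) with hψdef
  have hψconst : ∀ θ : ℝ, ψ θ = ψ 0 := by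
    have hlc : IsLocallyConstant ψ := by
      rw [IsLocallyConstant.iff_exists_open]
      intro θ₀
      obtain ⟨η, hη, hloc⟩ := hlocal _ (hcirc θ₀)
      refine ⟨Metric.ball θ₀ η, Metric.isOpen_ball, Metric.mem_ball_self hη, ?_⟩
      intro θ hθ
      have hθη : |θ - θ₀| < η := by simpa [Real.dist_eq] using hθ
      set t : ℂ := ((θ - θ₀ : ℝ) : ℂ) * Complex.I with htdef
      have htn : ‖t‖ < η := by
        rw [htdef]
        show ‖_‖ < η
        rw [norm_mul, Complex.norm_I, mul_one, Complex.norm_real, Real.norm_eq_abs]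
        exact hθη
      obtain ⟨-, heq⟩ := hloc t htn
      have hzz : (ρ:ℂ) * Complex.exp (θ₀ * Complex.I) * Complex.exp t =
          (ρ:ℂ) * Complex.exp (θ * Complex.I) := by
        rw [mul_assoc, ← Complex.exp_add]
        congr 2
        simp only [htdef, Complex.ofReal_sub]
        push_cast
        ring
      rw [hzz] at heq
      show f ((ρ:ℂ) * Complex.exp (θ * Complex.I)) * Complex.exp (-(α:ℂ) * (θ * Complex.I)) =
        f ((ρ:ℂ) * Complex.exp (θ₀ * Complex.I)) * Complex.exp (-(α:ℂ) * (θ₀ * Complex.I))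
      rw [heq, mul_assoc, ← Complex.exp_add]
      congr 2
      rw [htdef]
      push_cast
      ring
    exact fun θ => hlc.apply_eq_of_preconnectedSpace θ 0
  have hψ0 : ψ 0 = f (ρ:ℂ) := by
    rw [hψdef]
    norm_num
  have hρA : ((ρ:ℂ)) ∈ A := by
    have habsρ : ‖(ρ:ℂ)‖ = ρ := by rw [Complex.norm_real, Real.norm_eq_abs, abs_of_pos hρ0]
    refine ⟨?_, ?_⟩ <;> rw [habsρ]
    exacts [hρr, hρ1]
  have hfρne : f (ρ:ℂ) ≠ 0 := by
    intro h
    have := (hmf hρA).1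
    rw [h, norm_zero] at this
    linarith
  -- Step E : α is an integer
  have hψ2π := hψconst (2 * Real.pi)
  rw [hψ0] at hψ2π
  have hexp2π : Complex.exp (((2 * Real.pi : ℝ) : ℂ) * Complex.I) = 1 := by
    push_cast
    exact Complex.exp_two_pi_mul_I
  have he1 : Complex.exp (-(α:ℂ) * (((2 * Real.pi : ℝ) : ℂ) * Complex.I)) = 1 := by
    have h2 : f ((ρ:ℂ) * Complex.exp (((2 * Real.pi : ℝ):ℂ) * Complex.I)) = f (ρ:ℂ) := by
      rw [hexp2π, mul_one]
    have h3 := hψ2π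
    rw [show ψ (2 * Real.pi) = f ((ρ:ℂ) * Complex.exp (((2 * Real.pi : ℝ):ℂ) * Complex.I)) *
      Complex.exp (-(α:ℂ) * (((2 * Real.pi : ℝ):ℂ) * Complex.I)) from rfl, h2] at h3
    field_simp at h3
    rw [show (-(α:ℂ) * (((2 * Real.pi : ℝ):ℂ) * Complex.I)) =
      -((α:ℂ) * (2 * (Real.pi:ℂ) * Complex.I)) by push_cast; ring]
    convert h3 using 2
    push_cast
    ring
  obtain ⟨n, hn⟩ := Complex.exp_eq_one_iff.mp he1
  have h2πI : ((2 * Real.pi : ℝ) : ℂ) * Complex.I ≠ 0 := by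
    apply mul_ne_zero _ Complex.I_ne_zero
    exact_mod_cast (by positivity : (2 * Real.pi : ℝ) ≠ 0)
  have hnα : -(α:ℂ) = (n:ℂ) := by
    have : (n:ℂ) * (2 * ↑Real.pi * Complex.I) = (n:ℂ) * (((2 * Real.pi : ℝ) : ℂ) * Complex.I) := by
      push_cast
      ring
    rw [this] at hn
    exact mul_right_cancel₀ h2πI hn
  have hαint : ((-n : ℤ) : ℝ) = α := by
    have := congrArg Complex.re hnα
    simp only [Complex.neg_re, Complex.ofReal_re, Complex.intCast_re] at this
    push_cast
    linarith
  set m : ℤ := -n with hmdef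
  have hm1 : 1 ≤ m := by
    have : (0:ℝ) < (m:ℝ) := hαint ▸ hα
    exact_mod_cast this
  -- Step F : injectivity forces α = 1
  set θ₁ : ℝ := 2 * Real.pi / α with hθ₁def
  have hψθ₁ := hψconst θ₁
  rw [hψ0] at hψθ₁
  have hexpθ₁ : Complex.exp (-(α:ℂ) * (((θ₁ : ℝ) : ℂ) * Complex.I)) = 1 := by
    have : -(α:ℂ) * (((θ₁ : ℝ) : ℂ) * Complex.I) = -(((2 * Real.pi : ℝ) : ℂ) * Complex.I) := by
      have hc : ((α:ℝ):ℂ) * ((θ₁:ℝ):ℂ) = ((2 * Real.pi : ℝ):ℂ) := by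
        rw [← Complex.ofReal_mul]
        congr 1
        rw [hθ₁def]
        field_simp
      calc -(α:ℂ) * (((θ₁ : ℝ) : ℂ) * Complex.I) = -((((α:ℝ):ℂ) * ((θ₁:ℝ):ℂ)) * Complex.I) := by
            ring
        _ = -(((2 * Real.pi : ℝ) : ℂ) * Complex.I) := by rw [hc]
    rw [this, Complex.exp_neg, hexp2π]
    norm_num
  have hfz₁ : f ((ρ:ℂ) * Complex.exp (((θ₁:ℝ):ℂ) * Complex.I)) = f (ρ:ℂ) := by
    have h3 := hψθ₁
    rw [show ψ θ₁ = f ((ρ:ℂ) * Complex.exp (((θ₁:ℝ):ℂ) * Complex.I)) *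
      Complex.exp (-(α:ℂ) * (((θ₁:ℝ):ℂ) * Complex.I)) from rfl, hexpθ₁, mul_one] at h3
    exact h3
  have hz₁eq : (ρ:ℂ) * Complex.exp (((θ₁:ℝ):ℂ) * Complex.I) = (ρ:ℂ) := by
    have h1 := hgf _ (hcirc θ₁)
    have h2 := hgf _ hρA
    rw [hfz₁, h2] at h1
    exact h1.symm
  have hexpone : Complex.exp (((θ₁:ℝ):ℂ) * Complex.I) = 1 := by
    have hρne : ((ρ:ℂ)) ≠ 0 := by
      exact_mod_cast hρ0.ne'
    field_simp at hz₁eq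
    tauto
  obtain ⟨k, hk⟩ := Complex.exp_eq_one_iff.mp hexpone
  have hk' : ((θ₁:ℝ):ℂ) * Complex.I = ((k:ℂ) * (2 * (Real.pi:ℂ))) * Complex.I := by
    rw [hk]; ring
  have hc := mul_right_cancel₀ Complex.I_ne_zero hk'
  have hreal : θ₁ = (k:ℝ) * (2 * Real.pi) := by exact_mod_cast hc
  have hkα : (k:ℝ) * α = 1 := by
    rw [hθ₁def] at hreal
    have h2 : 2 * Real.pi = (k:ℝ) * (2 * Real.pi) * α := by
      rw [← hreal]
      field_simp
    have h3 : (2 * Real.pi) * ((k:ℝ) * α - 1) = 0 := by ring_nf; ring_nf at h2; linarith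
    rcases mul_eq_zero.mp h3 with h | h
    · exact absurd h (by positivity)
    · linarith
  have hkm : k * m = 1 := by
    have : (k:ℝ) * (m:ℝ) = 1 := by rw [hαint]; exact hkα
    exact_mod_cast this
  have hm : m = 1 := by
    rcases Int.mul_eq_one_iff_eq_one_or_neg_one.mp hkm with ⟨-, h⟩ | ⟨-, h⟩
    · exact h
    · omega
  have hα1 : α = 1 := by
    rw [← hαint, hm]
    norm_num
  have hlogeq : Real.log s = Real.log r := by
    rw [hαdef, div_eq_one_iff_eq (ne_of_lt hlr)] at hα1
    exact hα1
  rw [← Real.exp_log hr0, ← Real.exp_log hs0, hlogeq]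

/-- Properness: points near the boundary of `A_r` map near the boundary of `A_s`. -/
lemma proper_bd {r s : ℝ} {f g : ℂ → ℂ}
    (hg : DifferentiableOn ℂ g {z : ℂ | s < ‖z‖ ∧ ‖z‖ < 1})
    (hmg : MapsTo g {z : ℂ | s < ‖z‖ ∧ ‖z‖ < 1}
      {z : ℂ | r < ‖z‖ ∧ ‖z‖ < 1})
    (hgf : ∀ z ∈ {z : ℂ | r < ‖z‖ ∧ ‖z‖ < 1}, g (f z) = z)
    (hmf : MapsTo f {z : ℂ | r < ‖z‖ ∧ ‖z‖ < 1}
      {z : ℂ | s < ‖z‖ ∧ ‖z‖ < 1}) :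
    ∀ ε : ℝ, 0 < ε → ε < (1 - s) / 2 → ∃ δ > 0, ∀ z ∈ {z : ℂ | r < ‖z‖ ∧
      ‖z‖ < 1}, (‖z‖ < r + δ ∨ 1 - δ < ‖z‖) →
      (‖f z‖ < s + ε ∨ 1 - ε < ‖f z‖) := by
  intro ε hε hε2
  set K : Set ℂ := (fun z : ℂ => ‖z‖) ⁻¹' (Icc (s + ε) (1 - ε)) with hKdef
  have hKclosed : IsClosed K := isClosed_Icc.preimage continuous_norm
  have hKcpt : IsCompact K := by
    apply (isCompact_closedBall (0:ℂ) (1 - ε)).of_isClosed_subset hKclosed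
    intro z hz
    simpa [Metric.mem_closedBall, Complex.dist_eq] using hz.2
  have hKsub : K ⊆ {z : ℂ | s < ‖z‖ ∧ ‖z‖ < 1} := by
    intro z hz
    exact ⟨lt_of_lt_of_le (by linarith) hz.1, lt_of_le_of_lt hz.2 (by linarith)⟩
  set K' : Set ℂ := g '' K with hK'def
  have hK'cpt : IsCompact K' := hKcpt.image_of_continuousOn (hg.continuousOn.mono hKsub)
  have hK'sub : K' ⊆ {z : ℂ | r < ‖z‖ ∧ ‖z‖ < 1} := by
    rintro z ⟨w, hw, rfl⟩
    exact hmg (hKsub hw)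
  rcases K'.eq_empty_or_nonempty with hne | hne
  · refine ⟨1, one_pos, fun z hz _ => ?_⟩
    by_contra hcon
    push_neg at hcon
    have hfK : f z ∈ K := ⟨hcon.1, hcon.2⟩
    have : z ∈ K' := ⟨f z, hfK, hgf z hz⟩
    rw [hne] at this
    exact this
  · obtain ⟨z₁, hz₁K, hz₁min⟩ := hK'cpt.exists_isMinOn hne
      (continuous_norm.continuousOn)
    obtain ⟨z₂, hz₂K, hz₂max⟩ := hK'cpt.exists_isMaxOn hne
      (continuous_norm.continuousOn)
    have h₁ : r < ‖z₁‖ := (hK'sub hz₁K).1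
    have h₂ : ‖z₂‖ < 1 := (hK'sub hz₂K).2
    refine ⟨min (‖z₁‖ - r) (1 - ‖z₂‖),
      lt_min (by linarith) (by linarith), fun z hz hzb => ?_⟩
    by_contra hcon
    push_neg at hcon
    have hfK : f z ∈ K := ⟨hcon.1, hcon.2⟩
    have hzK' : z ∈ K' := ⟨f z, hfK, hgf z hz⟩
    have hmin : ‖z₁‖ ≤ ‖z‖ := hz₁min hzK'
    have hmax : ‖z‖ ≤ ‖z₂‖ := hz₂max hzK'
    rcases hzb with h | h
    · have : min (‖z₁‖ - r) (1 - ‖z₂‖) ≤ ‖z₁‖ - r :=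
        min_le_left _ _
      linarith
    · have : min (‖z₁‖ - r) (1 - ‖z₂‖) ≤ 1 - ‖z₂‖ :=
        min_le_right _ _
      linarith

lemma outer_cases {r s : ℝ} (hr0 : 0 < r) (hr1 : r < 1) (hs0 : 0 < s) (hs1 : s < 1) {f : ℂ → ℂ}
    (hfc : ContinuousOn f {z : ℂ | r < ‖z‖ ∧ ‖z‖ < 1})
    (hp : ∀ ε : ℝ, 0 < ε → ε < (1 - s) / 2 → ∃ δ > 0, ∀ z ∈ {z : ℂ | r < ‖z‖ ∧
      ‖z‖ < 1}, (‖z‖ < r + δ ∨ 1 - δ < ‖z‖) →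
      (‖f z‖ < s + ε ∨ 1 - ε < ‖f z‖)) :
    (∀ ε > 0, ∃ δ > 0, ∀ z : ℂ, 1 - δ < ‖z‖ → ‖z‖ < 1 →
      1 - ε < ‖f z‖) ∨
    (∀ ε > 0, ∃ δ > 0, ∀ z : ℂ, 1 - δ < ‖z‖ → ‖z‖ < 1 →
      ‖f z‖ < s + ε) := by
  have hlevel : ∀ ε : ℝ, 0 < ε → ε < (1 - s) / 2 →
      (∃ δ : ℝ, 0 < δ ∧ δ ≤ (1 - r) / 2 ∧ ∀ z : ℂ, 1 - δ < ‖z‖ →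
        ‖z‖ < 1 → ‖f z‖ < s + ε) ∨
      (∃ δ : ℝ, 0 < δ ∧ δ ≤ (1 - r) / 2 ∧ ∀ z : ℂ, 1 - δ < ‖z‖ →
        ‖z‖ < 1 → 1 - ε < ‖f z‖) := by
    intro ε hε hε2
    obtain ⟨δ, hδ0, hδ⟩ := hp ε hε hε2
    set δ' : ℝ := min δ ((1 - r) / 2) with hδ'def
    have hδ'0 : 0 < δ' := lt_min hδ0 (by linarith)
    have hδ'le : δ' ≤ (1 - r) / 2 := min_le_right _ _
    have hδ'δ : δ' ≤ δ := min_le_left _ _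
    set R : Set ℂ := {z : ℂ | 1 - δ' < ‖z‖ ∧ ‖z‖ < 1} with hRdef
    have hRA : R ⊆ {z : ℂ | r < ‖z‖ ∧ ‖z‖ < 1} := by
      intro z hz
      exact ⟨by have := hz.1; linarith, hz.2⟩
    have hRconn : IsPreconnected R := ring_preconnected (by linarith)
    have himg : IsPreconnected (f '' R) := hRconn.image f (hfc.mono hRA)
    have hsub : f '' R ⊆ {w : ℂ | ‖w‖ < s + ε} ∪ {w : ℂ | 1 - ε < ‖w‖} := by
      rintro w ⟨z, hz, rfl⟩
      rcases hδ z (hRA hz) (Or.inr (lt_of_le_of_lt (by linarith) hz.1)) with h | h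
      · exact Or.inl h
      · exact Or.inr h
    have hu : IsOpen {w : ℂ | ‖w‖ < s + ε} := isOpen_Iio.preimage continuous_norm
    have hv : IsOpen {w : ℂ | 1 - ε < ‖w‖} := isOpen_Ioi.preimage continuous_norm
    have hdisj : Disjoint {w : ℂ | ‖w‖ < s + ε} {w : ℂ | 1 - ε < ‖w‖} := by
      rw [Set.disjoint_left]
      intro w h1 h2
      simp only [mem_setOf_eq] at h1 h2
      linarith
    rcases himg.subset_or_subset hu hv hdisj hsub with h | h
    · exact Or.inl ⟨δ', hδ'0, hδ'le, fun z h1 h2 => h ⟨z, ⟨h1, h2⟩, rfl⟩⟩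
    · exact Or.inr ⟨δ', hδ'0, hδ'le, fun z h1 h2 => h ⟨z, ⟨h1, h2⟩, rfl⟩⟩
  have hε₀ : (0:ℝ) < (1 - s) / 4 := by linarith
  have hε₀2 : (1 - s) / 4 < (1 - s) / 2 := by linarith
  rcases hlevel ((1 - s) / 4) hε₀ hε₀2 with ⟨δ₀, hδ₀0, hδ₀le, hδ₀⟩ | ⟨δ₀, hδ₀0, hδ₀le, hδ₀⟩
  · -- f tends to the inner circle on the outer ring
    right
    intro ε hε
    set ε' : ℝ := min ε ((1 - s) / 4) with hε'def
    have hε'0 : 0 < ε' := lt_min hε hε₀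
    have hε'le : ε' ≤ (1 - s) / 4 := min_le_right _ _
    rcases hlevel ε' hε'0 (by linarith) with ⟨δ₁, hδ₁0, hδ₁le, hδ₁⟩ | ⟨δ₁, hδ₁0, hδ₁le, hδ₁⟩
    · exact ⟨δ₁, hδ₁0, fun z h1 h2 => lt_of_lt_of_le (hδ₁ z h1 h2)
        (by have : ε' ≤ ε := min_le_left _ _; linarith)⟩
    · exfalso
      set δ'' : ℝ := min δ₁ δ₀ with hδ''def
      have hδ''0 : 0 < δ'' := lt_min hδ₁0 hδ₀0
      have h1 : δ'' ≤ δ₁ := min_le_left _ _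
      have h2 : δ'' ≤ δ₀ := min_le_right _ _
      set x : ℝ := 1 - δ'' / 2 with hxdef
      have hx1 : x < 1 := by rw [hxdef]; linarith
      have hx0 : 0 < x := by
        have : δ'' ≤ (1 - r) / 2 := le_trans h1 hδ₁le
        rw [hxdef]; linarith
      have hxabs : ‖((x:ℝ):ℂ)‖ = x := by
        rw [Complex.norm_real, Real.norm_eq_abs, abs_of_pos hx0]
      have hxin1 : 1 - δ₁ < ‖((x:ℝ):ℂ)‖ := by rw [hxabs, hxdef]; linarith
      have hxin0 : 1 - δ₀ < ‖((x:ℝ):ℂ)‖ := by rw [hxabs, hxdef]; linarith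
      have hxlt : ‖((x:ℝ):ℂ)‖ < 1 := by rw [hxabs]; exact hx1
      have ha := hδ₁ _ hxin1 hxlt
      have hb := hδ₀ _ hxin0 hxlt
      have : ε' ≤ (1 - s) / 4 := hε'le
      linarith
  · -- f tends to the unit circle on the outer ring
    left
    intro ε hε
    set ε' : ℝ := min ε ((1 - s) / 4) with hε'def
    have hε'0 : 0 < ε' := lt_min hε hε₀
    have hε'le : ε' ≤ (1 - s) / 4 := min_le_right _ _
    rcases hlevel ε' hε'0 (by linarith) with ⟨δ₁, hδ₁0, hδ₁le, hδ₁⟩ | ⟨δ₁, hδ₁0, hδ₁le, hδ₁⟩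
    · exfalso
      set δ'' : ℝ := min δ₁ δ₀ with hδ''def
      have hδ''0 : 0 < δ'' := lt_min hδ₁0 hδ₀0
      have h1 : δ'' ≤ δ₁ := min_le_left _ _
      have h2 : δ'' ≤ δ₀ := min_le_right _ _
      set x : ℝ := 1 - δ'' / 2 with hxdef
      have hx1 : x < 1 := by rw [hxdef]; linarith
      have hx0 : 0 < x := by
        have : δ'' ≤ (1 - r) / 2 := le_trans h1 hδ₁le
        rw [hxdef]; linarith
      have hxabs : ‖((x:ℝ):ℂ)‖ = x := by
        rw [Complex.norm_real, Real.norm_eq_abs, abs_of_pos hx0]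
      have hxin1 : 1 - δ₁ < ‖((x:ℝ):ℂ)‖ := by rw [hxabs, hxdef]; linarith
      have hxin0 : 1 - δ₀ < ‖((x:ℝ):ℂ)‖ := by rw [hxabs, hxdef]; linarith
      have hxlt : ‖((x:ℝ):ℂ)‖ < 1 := by rw [hxabs]; exact hx1
      have ha := hδ₁ _ hxin1 hxlt
      have hb := hδ₀ _ hxin0 hxlt
      have : ε' ≤ (1 - s) / 4 := hε'le
      linarith
    · exact ⟨δ₁, hδ₁0, fun z h1 h2 => lt_of_le_of_lt
        (by have : ε' ≤ ε := min_le_left _ _; linarith) (hδ₁ z h1 h2)⟩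

lemma inner_cases {r s : ℝ} (hr0 : 0 < r) (hr1 : r < 1) (hs0 : 0 < s) (hs1 : s < 1) {f : ℂ → ℂ}
    (hfc : ContinuousOn f {z : ℂ | r < ‖z‖ ∧ ‖z‖ < 1})
    (hp : ∀ ε : ℝ, 0 < ε → ε < (1 - s) / 2 → ∃ δ > 0, ∀ z ∈ {z : ℂ | r < ‖z‖ ∧
      ‖z‖ < 1}, (‖z‖ < r + δ ∨ 1 - δ < ‖z‖) →
      (‖f z‖ < s + ε ∨ 1 - ε < ‖f z‖)) :
    (∀ ε > 0, ∃ δ > 0, ∀ z : ℂ, r < ‖z‖ → ‖z‖ < r + δ →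
      1 - ε < ‖f z‖) ∨
    (∀ ε > 0, ∃ δ > 0, ∀ z : ℂ, r < ‖z‖ → ‖z‖ < r + δ →
      ‖f z‖ < s + ε) := by
  have hlevel : ∀ ε : ℝ, 0 < ε → ε < (1 - s) / 2 →
      (∃ δ : ℝ, 0 < δ ∧ δ ≤ (1 - r) / 2 ∧ ∀ z : ℂ, r < ‖z‖ →
        ‖z‖ < r + δ → ‖f z‖ < s + ε) ∨
      (∃ δ : ℝ, 0 < δ ∧ δ ≤ (1 - r) / 2 ∧ ∀ z : ℂ, r < ‖z‖ →
        ‖z‖ < r + δ → 1 - ε < ‖f z‖) := by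
    intro ε hε hε2
    obtain ⟨δ, hδ0, hδ⟩ := hp ε hε hε2
    set δ' : ℝ := min δ ((1 - r) / 2) with hδ'def
    have hδ'0 : 0 < δ' := lt_min hδ0 (by linarith)
    have hδ'le : δ' ≤ (1 - r) / 2 := min_le_right _ _
    have hδ'δ : δ' ≤ δ := min_le_left _ _
    set R : Set ℂ := {z : ℂ | r < ‖z‖ ∧ ‖z‖ < r + δ'} with hRdef
    have hRA : R ⊆ {z : ℂ | r < ‖z‖ ∧ ‖z‖ < 1} := by
      intro z hz
      refine ⟨hz.1, ?_⟩
      have := hz.2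
      linarith
    have hRconn : IsPreconnected R := ring_preconnected hr0.le
    have himg : IsPreconnected (f '' R) := hRconn.image f (hfc.mono hRA)
    have hsub : f '' R ⊆ {w : ℂ | ‖w‖ < s + ε} ∪ {w : ℂ | 1 - ε < ‖w‖} := by
      rintro w ⟨z, hz, rfl⟩
      rcases hδ z (hRA hz) (Or.inl (lt_of_lt_of_le hz.2 (by linarith))) with h | h
      · exact Or.inl h
      · exact Or.inr h
    have hu : IsOpen {w : ℂ | ‖w‖ < s + ε} := isOpen_Iio.preimage continuous_norm
    have hv : IsOpen {w : ℂ | 1 - ε < ‖w‖} := isOpen_Ioi.preimage continuous_norm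
    have hdisj : Disjoint {w : ℂ | ‖w‖ < s + ε} {w : ℂ | 1 - ε < ‖w‖} := by
      rw [Set.disjoint_left]
      intro w h1 h2
      simp only [mem_setOf_eq] at h1 h2
      linarith
    rcases himg.subset_or_subset hu hv hdisj hsub with h | h
    · exact Or.inl ⟨δ', hδ'0, hδ'le, fun z h1 h2 => h ⟨z, ⟨h1, h2⟩, rfl⟩⟩
    · exact Or.inr ⟨δ', hδ'0, hδ'le, fun z h1 h2 => h ⟨z, ⟨h1, h2⟩, rfl⟩⟩
  have hε₀ : (0:ℝ) < (1 - s) / 4 := by linarith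
  have hε₀2 : (1 - s) / 4 < (1 - s) / 2 := by linarith
  rcases hlevel ((1 - s) / 4) hε₀ hε₀2 with ⟨δ₀, hδ₀0, hδ₀le, hδ₀⟩ | ⟨δ₀, hδ₀0, hδ₀le, hδ₀⟩
  · right
    intro ε hε
    set ε' : ℝ := min ε ((1 - s) / 4) with hε'def
    have hε'0 : 0 < ε' := lt_min hε hε₀
    have hε'le : ε' ≤ (1 - s) / 4 := min_le_right _ _
    rcases hlevel ε' hε'0 (by linarith) with ⟨δ₁, hδ₁0, hδ₁le, hδ₁⟩ | ⟨δ₁, hδ₁0, hδ₁le, hδ₁⟩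
    · exact ⟨δ₁, hδ₁0, fun z h1 h2 => lt_of_lt_of_le (hδ₁ z h1 h2)
        (by have : ε' ≤ ε := min_le_left _ _; linarith)⟩
    · exfalso
      set δ'' : ℝ := min δ₁ δ₀ with hδ''def
      have hδ''0 : 0 < δ'' := lt_min hδ₁0 hδ₀0
      have h1 : δ'' ≤ δ₁ := min_le_left _ _
      have h2 : δ'' ≤ δ₀ := min_le_right _ _
      set x : ℝ := r + δ'' / 2 with hxdef
      have hx0 : 0 < x := by rw [hxdef]; linarith
      have hxabs : ‖((x:ℝ):ℂ)‖ = x := by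
        rw [Complex.norm_real, Real.norm_eq_abs, abs_of_pos hx0]
      have hxgt : r < ‖((x:ℝ):ℂ)‖ := by rw [hxabs, hxdef]; linarith
      have hxin1 : ‖((x:ℝ):ℂ)‖ < r + δ₁ := by rw [hxabs, hxdef]; linarith
      have hxin0 : ‖((x:ℝ):ℂ)‖ < r + δ₀ := by rw [hxabs, hxdef]; linarith
      have ha := hδ₁ _ hxgt hxin1
      have hb := hδ₀ _ hxgt hxin0
      have : ε' ≤ (1 - s) / 4 := hε'le
      linarith
  · left
    intro ε hε
    set ε' : ℝ := min ε ((1 - s) / 4) with hε'def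
    have hε'0 : 0 < ε' := lt_min hε hε₀
    have hε'le : ε' ≤ (1 - s) / 4 := min_le_right _ _
    rcases hlevel ε' hε'0 (by linarith) with ⟨δ₁, hδ₁0, hδ₁le, hδ₁⟩ | ⟨δ₁, hδ₁0, hδ₁le, hδ₁⟩
    · exfalso
      set δ'' : ℝ := min δ₁ δ₀ with hδ''def
      have hδ''0 : 0 < δ'' := lt_min hδ₁0 hδ₀0
      have h1 : δ'' ≤ δ₁ := min_le_left _ _
      have h2 : δ'' ≤ δ₀ := min_le_right _ _
      set x : ℝ := r + δ'' / 2 with hxdef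
      have hx0 : 0 < x := by rw [hxdef]; linarith
      have hxabs : ‖((x:ℝ):ℂ)‖ = x := by
        rw [Complex.norm_real, Real.norm_eq_abs, abs_of_pos hx0]
      have hxgt : r < ‖((x:ℝ):ℂ)‖ := by rw [hxabs, hxdef]; linarith
      have hxin1 : ‖((x:ℝ):ℂ)‖ < r + δ₁ := by rw [hxabs, hxdef]; linarith
      have hxin0 : ‖((x:ℝ):ℂ)‖ < r + δ₀ := by rw [hxabs, hxdef]; linarith
      have ha := hδ₁ _ hxgt hxin1
      have hb := hδ₀ _ hxgt hxin0
      have : ε' ≤ (1 - s) / 4 := hε'le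
      linarith
    · exact ⟨δ₁, hδ₁0, fun z h1 h2 => lt_of_le_of_lt
        (by have : ε' ≤ ε := min_le_left _ _; linarith) (hδ₁ z h1 h2)⟩

lemma not_both_one {r s : ℝ} (hr0 : 0 < r) (hr1 : r < 1) (hs0 : 0 < s) (hs1 : s < 1) {f : ℂ → ℂ}
    (hfc : ContinuousOn f {z : ℂ | r < ‖z‖ ∧ ‖z‖ < 1})
    (hmf : MapsTo f {z : ℂ | r < ‖z‖ ∧ ‖z‖ < 1}
      {z : ℂ | s < ‖z‖ ∧ ‖z‖ < 1})
    (hsurj : ∀ w ∈ {z : ℂ | s < ‖z‖ ∧ ‖z‖ < 1},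
      ∃ z ∈ {z : ℂ | r < ‖z‖ ∧ ‖z‖ < 1}, f z = w)
    (hO : ∀ ε > 0, ∃ δ > 0, ∀ z : ℂ, 1 - δ < ‖z‖ → ‖z‖ < 1 →
      1 - ε < ‖f z‖)
    (hI : ∀ ε > 0, ∃ δ > 0, ∀ z : ℂ, r < ‖z‖ → ‖z‖ < r + δ →
      1 - ε < ‖f z‖) : False := by
  set ε₁ : ℝ := (1 - s) / 2 with hε₁def
  have hε₁0 : 0 < ε₁ := by rw [hε₁def]; linarith
  set v : ℝ := 1 - ε₁ with hvdef
  have hvs : s < v := by rw [hvdef, hε₁def]; linarith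
  have hv1 : v < 1 := by rw [hvdef]; linarith
  obtain ⟨δO, hδO0, hδO⟩ := hO ε₁ hε₁0
  obtain ⟨δI, hδI0, hδI⟩ := hI ε₁ hε₁0
  set δ : ℝ := min δO δI with hδdef
  have hδ0 : 0 < δ := lt_min hδO0 hδI0
  set M : Set ℂ := {z : ℂ | r + δ ≤ ‖z‖ ∧ ‖z‖ ≤ 1 - δ} with hMdef
  have hMA : M ⊆ {z : ℂ | r < ‖z‖ ∧ ‖z‖ < 1} := fun z hz =>
    ⟨lt_of_lt_of_le (by linarith) hz.1, lt_of_le_of_lt hz.2 (by linarith)⟩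
  have hrings : ∀ z ∈ {z : ℂ | r < ‖z‖ ∧ ‖z‖ < 1}, z ∉ M →
      v < ‖f z‖ := by
    intro z hz hzM
    rcases not_and_or.mp hzM with h | h
    · push_neg at h
      exact hδI z hz.1 (lt_of_lt_of_le h (by have := min_le_right δO δI; linarith))
    · push_neg at h
      exact hδO z (by have := min_le_left δO δI; linarith) hz.2
  -- a lower bound for |f| on all of A_r
  have hbound : ∃ c : ℝ, s < c ∧ ∀ z ∈ {z : ℂ | r < ‖z‖ ∧ ‖z‖ < 1},
      c ≤ ‖f z‖ := by
    rcases M.eq_empty_or_nonempty with hMe | hMne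
    · refine ⟨v, hvs, fun z hz => ?_⟩
      have : z ∉ M := by rw [hMe]; exact notMem_empty z
      exact (hrings z hz this).le
    · have hMclosed : IsClosed M := by
        have : M = (fun z : ℂ => ‖z‖) ⁻¹' (Icc (r + δ) (1 - δ)) := rfl
        rw [this]
        exact isClosed_Icc.preimage continuous_norm
      have hMcpt : IsCompact M := by
        apply (isCompact_closedBall (0:ℂ) (1 - δ)).of_isClosed_subset hMclosed
        intro z hz
        simpa [Metric.mem_closedBall, Complex.dist_eq] using hz.2
      obtain ⟨z₁, hz₁M, hz₁min⟩ := hMcpt.exists_isMinOn hMne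
        (continuous_norm.comp_continuousOn (hfc.mono hMA))
      have hmin : s < ‖f z₁‖ := (hmf (hMA hz₁M)).1
      refine ⟨min (‖f z₁‖) v, lt_min hmin hvs, fun z hz => ?_⟩
      by_cases hzM : z ∈ M
      · exact le_trans (min_le_left _ _) (hz₁min hzM)
      · exact le_trans (min_le_right _ _) (hrings z hz hzM).le
  obtain ⟨c, hc, hcb⟩ := hbound
  set c' : ℝ := min c 1 with hc'def
  have hc's : s < c' := lt_min hc hs1
  set w₀ : ℂ := (((s + c') / 2 : ℝ) : ℂ) with hw₀def
  have hw₀abs : ‖w₀‖ = (s + c') / 2 := by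
    rw [hw₀def, Complex.norm_real, Real.norm_eq_abs, abs_of_pos (by linarith)]
  have hw₀A : w₀ ∈ {z : ℂ | s < ‖z‖ ∧ ‖z‖ < 1} := by
    constructor <;> rw [hw₀abs]
    · linarith
    · have : c' ≤ 1 := min_le_right c 1
      linarith
  obtain ⟨z₀, hz₀A, hz₀⟩ := hsurj w₀ hw₀A
  have := hcb z₀ hz₀A
  rw [hz₀, hw₀abs] at this
  have hcc : c' ≤ c := min_le_left c 1
  linarith

lemma not_both_s {r s : ℝ} (hr0 : 0 < r) (hr1 : r < 1) (hs0 : 0 < s) (hs1 : s < 1) {f : ℂ → ℂ}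
    (hfc : ContinuousOn f {z : ℂ | r < ‖z‖ ∧ ‖z‖ < 1})
    (hmf : MapsTo f {z : ℂ | r < ‖z‖ ∧ ‖z‖ < 1}
      {z : ℂ | s < ‖z‖ ∧ ‖z‖ < 1})
    (hsurj : ∀ w ∈ {z : ℂ | s < ‖z‖ ∧ ‖z‖ < 1},
      ∃ z ∈ {z : ℂ | r < ‖z‖ ∧ ‖z‖ < 1}, f z = w)
    (hO : ∀ ε > 0, ∃ δ > 0, ∀ z : ℂ, 1 - δ < ‖z‖ → ‖z‖ < 1 →
      ‖f z‖ < s + ε)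
    (hI : ∀ ε > 0, ∃ δ > 0, ∀ z : ℂ, r < ‖z‖ → ‖z‖ < r + δ →
      ‖f z‖ < s + ε) : False := by
  set ε₁ : ℝ := (1 - s) / 2 with hε₁def
  have hε₁0 : 0 < ε₁ := by rw [hε₁def]; linarith
  set v : ℝ := s + ε₁ with hvdef
  have hvs : s < v := by rw [hvdef]; linarith
  have hv1 : v < 1 := by rw [hvdef, hε₁def]; linarith
  obtain ⟨δO, hδO0, hδO⟩ := hO ε₁ hε₁0
  obtain ⟨δI, hδI0, hδI⟩ := hI ε₁ hε₁0
  set δ : ℝ := min δO δI with hδdef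
  have hδ0 : 0 < δ := lt_min hδO0 hδI0
  set M : Set ℂ := {z : ℂ | r + δ ≤ ‖z‖ ∧ ‖z‖ ≤ 1 - δ} with hMdef
  have hMA : M ⊆ {z : ℂ | r < ‖z‖ ∧ ‖z‖ < 1} := fun z hz =>
    ⟨lt_of_lt_of_le (by linarith) hz.1, lt_of_le_of_lt hz.2 (by linarith)⟩
  have hrings : ∀ z ∈ {z : ℂ | r < ‖z‖ ∧ ‖z‖ < 1}, z ∉ M →
      ‖f z‖ < v := by
    intro z hz hzM
    rcases not_and_or.mp hzM with h | h
    · push_neg at h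
      exact hδI z hz.1 (lt_of_lt_of_le h (by have := min_le_right δO δI; linarith))
    · push_neg at h
      exact hδO z (by have := min_le_left δO δI; linarith) hz.2
  have hbound : ∃ c : ℝ, c < 1 ∧ ∀ z ∈ {z : ℂ | r < ‖z‖ ∧ ‖z‖ < 1},
      ‖f z‖ ≤ c := by
    rcases M.eq_empty_or_nonempty with hMe | hMne
    · refine ⟨v, hv1, fun z hz => ?_⟩
      have : z ∉ M := by rw [hMe]; exact notMem_empty z
      exact (hrings z hz this).le
    · have hMclosed : IsClosed M := by
        have : M = (fun z : ℂ => ‖z‖) ⁻¹' (Icc (r + δ) (1 - δ)) := rfl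
        rw [this]
        exact isClosed_Icc.preimage continuous_norm
      have hMcpt : IsCompact M := by
        apply (isCompact_closedBall (0:ℂ) (1 - δ)).of_isClosed_subset hMclosed
        intro z hz
        simpa [Metric.mem_closedBall, Complex.dist_eq] using hz.2
      obtain ⟨z₁, hz₁M, hz₁max⟩ := hMcpt.exists_isMaxOn hMne
        (continuous_norm.comp_continuousOn (hfc.mono hMA))
      have hmax : ‖f z₁‖ < 1 := (hmf (hMA hz₁M)).2
      refine ⟨max (‖f z₁‖) v, max_lt hmax hv1, fun z hz => ?_⟩
      by_cases hzM : z ∈ M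
      · exact le_trans (hz₁max hzM) (le_max_left _ _)
      · exact le_trans (hrings z hz hzM).le (le_max_right _ _)
  obtain ⟨c, hc, hcb⟩ := hbound
  set c' : ℝ := max c s with hc'def
  have hc'1 : c' < 1 := max_lt hc hs1
  set w₀ : ℂ := (((c' + 1) / 2 : ℝ) : ℂ) with hw₀def
  have hw₀abs : ‖w₀‖ = (c' + 1) / 2 := by
    rw [hw₀def, Complex.norm_real, Real.norm_eq_abs, abs_of_pos (by have := le_max_right c s; linarith)]
  have hw₀A : w₀ ∈ {z : ℂ | s < ‖z‖ ∧ ‖z‖ < 1} := by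
    constructor <;> rw [hw₀abs]
    · have : s ≤ c' := le_max_right c s
      linarith
    · linarith
  obtain ⟨z₀, hz₀A, hz₀⟩ := hsurj w₀ hw₀A
  have := hcb z₀ hz₀A
  rw [hz₀, hw₀abs] at this
  have hcc : c ≤ c' := le_max_left c s
  linarith

/-- Two standard annuli `A_{r,1}` and `A_{s,1}` with `0 < r, s < 1` are biholomorphic
if and only if `r = s`. -/
theorem stmt_13 (r s : ℝ) (hr0 : 0 < r) (hr1 : r < 1) (hs0 : 0 < s) (hs1 : s < 1) :
    (∃ f g : ℂ → ℂ,
      DifferentiableOn ℂ f {z : ℂ | r < ‖z‖ ∧ ‖z‖ < 1} ∧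
      DifferentiableOn ℂ g {z : ℂ | s < ‖z‖ ∧ ‖z‖ < 1} ∧
      Set.MapsTo f {z : ℂ | r < ‖z‖ ∧ ‖z‖ < 1}
        {z : ℂ | s < ‖z‖ ∧ ‖z‖ < 1} ∧
      Set.MapsTo g {z : ℂ | s < ‖z‖ ∧ ‖z‖ < 1}
        {z : ℂ | r < ‖z‖ ∧ ‖z‖ < 1} ∧
      (∀ z ∈ {z : ℂ | r < ‖z‖ ∧ ‖z‖ < 1}, g (f z) = z) ∧
      (∀ z ∈ {z : ℂ | s < ‖z‖ ∧ ‖z‖ < 1}, f (g z) = z)) ↔ r = s := by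
  constructor
  · rintro ⟨f, g, hf, hg, hmf, hmg, hgf, hfg⟩
    have hsurj : ∀ w ∈ {z : ℂ | s < ‖z‖ ∧ ‖z‖ < 1},
        ∃ z ∈ {z : ℂ | r < ‖z‖ ∧ ‖z‖ < 1}, f z = w :=
      fun w hw => ⟨g w, hmg hw, hfg w hw⟩
    have hp := proper_bd hg hmg hgf hmf
    have hfc := hf.continuousOn
    have hfne : ∀ z ∈ {z : ℂ | r < ‖z‖ ∧ ‖z‖ < 1}, f z ≠ 0 := by
      intro z hz h
      have := (hmf hz).1
      rw [h, norm_zero] at this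
      linarith
    rcases outer_cases hr0 hr1 hs0 hs1 hfc hp with hO | hO <;>
      rcases inner_cases hr0 hr1 hs0 hs1 hfc hp with hI | hI
    · -- both to the unit circle : impossible
      exact absurd (And.intro hO hI) (fun h => not_both_one hr0 hr1 hs0 hs1 hfc hmf hsurj h.1 h.2)
    · -- outer to unit circle, inner to circle s : the good case
      exact key hr0 hr1 hs0 hs1 hf hmf hgf hO hI
    · -- outer to circle s, inner to unit circle : invert
      set f' : ℂ → ℂ := fun z => (s:ℂ) / f z with hf'def
      set g' : ℂ → ℂ := fun w => g ((s:ℂ) / w) with hg'def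
      have hsne : ((s:ℝ):ℂ) ≠ 0 := by exact_mod_cast hs0.ne'
      have habs' : ∀ z ∈ {z : ℂ | r < ‖z‖ ∧ ‖z‖ < 1},
          ‖f' z‖ = s / ‖f z‖ := by
        intro z hz
        rw [hf'def]
        simp only [norm_div, Complex.norm_real, Real.norm_eq_abs, abs_of_pos hs0]
      have hf'd : DifferentiableOn ℂ f' {z : ℂ | r < ‖z‖ ∧ ‖z‖ < 1} :=
        (differentiableOn_const _).div hf hfne
      have hmf' : MapsTo f' {z : ℂ | r < ‖z‖ ∧ ‖z‖ < 1}
          {z : ℂ | s < ‖z‖ ∧ ‖z‖ < 1} := by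
        intro z hz
        have h1 := (hmf hz).1
        have h2 := (hmf hz).2
        have hpos : 0 < ‖f z‖ := lt_trans hs0 h1
        refine ⟨?_, ?_⟩ <;> rw [habs' z hz]
        · rw [lt_div_iff₀ hpos]
          nlinarith
        · rw [div_lt_one hpos]
          exact h1
      have hg'f' : ∀ z ∈ {z : ℂ | r < ‖z‖ ∧ ‖z‖ < 1}, g' (f' z) = z := by
        intro z hz
        have : (s:ℂ) / ((s:ℂ) / f z) = f z := by
          rw [div_div_eq_mul_div, mul_comm, mul_div_assoc, div_self hsne, mul_one]
        rw [hg'def, hf'def]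
        simp only
        rw [this]
        exact hgf z hz
      have hb' : ∀ ε > 0, ∃ δ > 0, ∀ z : ℂ, 1 - δ < ‖z‖ → ‖z‖ < 1 →
          1 - ε < ‖f' z‖ := by
        intro ε hε
        by_cases hε1 : 1 ≤ ε
        · refine ⟨(1 - r) / 2, by linarith, fun z h1 h2 => ?_⟩
          have hzA : z ∈ {z : ℂ | r < ‖z‖ ∧ ‖z‖ < 1} :=
            ⟨by linarith, h2⟩
          have hpos : 0 < ‖f z‖ := lt_trans hs0 (hmf hzA).1
          rw [habs' z hzA]
          have : 0 < s / ‖f z‖ := by positivity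
          linarith
        · push_neg at hε1
          set ε' : ℝ := s * ε / (1 - ε) with hε'def
          have hε'0 : 0 < ε' := by
            rw [hε'def]
            exact div_pos (mul_pos hs0 hε) (by linarith)
          obtain ⟨δ₁, hδ₁0, hδ₁⟩ := hO ε' hε'0
          refine ⟨min δ₁ ((1 - r) / 2), lt_min hδ₁0 (by linarith), fun z h1 h2 => ?_⟩
          have hd1 : min δ₁ ((1 - r) / 2) ≤ δ₁ := min_le_left _ _
          have hd2 : min δ₁ ((1 - r) / 2) ≤ (1 - r) / 2 := min_le_right _ _
          have hzA : z ∈ {z : ℂ | r < ‖z‖ ∧ ‖z‖ < 1} :=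
            ⟨by linarith, h2⟩
          have hfz := hδ₁ z (by linarith) h2
          have hpos : 0 < ‖f z‖ := lt_trans hs0 (hmf hzA).1
          rw [habs' z hzA]
          have hkey : (1 - ε) * (s + ε') = s := by
            have hne : (1:ℝ) - ε ≠ 0 := ne_of_gt (by linarith)
            rw [hε'def]
            field_simp
            ring
          have h3 : s / (s + ε') < s / ‖f z‖ :=
            div_lt_div_of_pos_left hs0 hpos hfz
          have h4 : 1 - ε = s / (s + ε') := by
            rw [eq_div_iff (by positivity : (s + ε') ≠ 0)]
            exact hkey
          linarith
      have hb'' : ∀ ε > 0, ∃ δ > 0, ∀ z : ℂ, r < ‖z‖ → ‖z‖ < r + δ →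
          ‖f' z‖ < s + ε := by
        intro ε hε
        set ε'' : ℝ := ε / (2 * (s + ε)) with hε''def
        have hε''0 : 0 < ε'' := by rw [hε''def]; positivity
        have hε''1 : ε'' < 1 := by
          rw [hε''def, div_lt_one (by positivity)]
          linarith
        obtain ⟨δ₁, hδ₁0, hδ₁⟩ := hI ε'' hε''0
        refine ⟨min δ₁ ((1 - r) / 2), lt_min hδ₁0 (by linarith), fun z h1 h2 => ?_⟩
        have hd1 : min δ₁ ((1 - r) / 2) ≤ δ₁ := min_le_left _ _
        have hd2 : min δ₁ ((1 - r) / 2) ≤ (1 - r) / 2 := min_le_right _ _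
        have hzA : z ∈ {z : ℂ | r < ‖z‖ ∧ ‖z‖ < 1} :=
          ⟨h1, by linarith⟩
        have hfz := hδ₁ z h1 (by linarith)
        rw [habs' z hzA]
        have h3 : s / ‖f z‖ < s / (1 - ε'') :=
          div_lt_div_of_pos_left hs0 (by linarith) hfz
        have h4 : s / (1 - ε'') ≤ s + ε := by
          rw [div_le_iff₀ (by linarith)]
          have : (s + ε) * ε'' = ε / 2 := by
            rw [hε''def]
            field_simp
          nlinarith
        linarith
      exact key hr0 hr1 hs0 hs1 hf'd hmf' hg'f' hb' hb''
    · -- both to circle s : impossible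
      exact absurd (And.intro hO hI) (fun h => not_both_s hr0 hr1 hs0 hs1 hfc hmf hsurj h.1 h.2)
  · intro h
    subst h
    exact ⟨id, id, differentiableOn_id, differentiableOn_id, mapsTo_id _, mapsTo_id _,
      fun z _ => rfl, fun z _ => rfl⟩
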